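/- Let G be a finite edge-labeled graph with every node having an incoming edge, and suppose nodes u ≠ v satisfy min_u = min_v. Then there exist incoming edges (u', u) and (v', v) with the same label such that min_{u'} = min_{v'}. -/
import Mathlib


open scoped Classical

/-- Length of the longest common prefix of two infinite strings, valued in `ℕ∞`. -/
noncomputable def lcp {A : Type*} (α β : ℕ → A) : ℕ∞ :=
  ⨆ k : {k : ℕ // ∀ i < k, α i = β i}, (k : ℕ∞)

/-- Strict lexicographic order on infinite strings. -/
def LexLt {A : Type*} [LinearOrder A] (α β : ℕ → A) : Prop :=
  ∃ i, (∀ j < i, α j = β j) ∧ α i < β i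

/-- Non-strict lexicographic order on infinite strings. -/
def LexLe {A : Type*} [LinearOrder A] (α β : ℕ → A) : Prop :=
  LexLt α β ∨ α = β

/-- Prepend a character to an infinite string. -/
def consStr {A : Type*} (c : A) (α : ℕ → A) : ℕ → A :=
  fun n => Nat.casesOn n c α

/-- `α` can be read from `u` following edges of the labeled graph `edge` backward. -/
def ReadableBackward {V A : Type*} (edge : V → V → A → Prop) (u : V) (α : ℕ → A) : Prop :=
  ∃ v : ℕ → V, v 0 = u ∧ ∀ k, edge (v (k + 1)) (v k) (α k)

/-- `α` is the lexicographically smallest infinite string readable backward from `u`. -/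
def IsMinStr {V A : Type*} [LinearOrder A] (edge : V → V → A → Prop) (u : V) (α : ℕ → A) : Prop :=
  ReadableBackward edge u α ∧ ∀ β, ReadableBackward edge u β → LexLe α β

/-- `α` is the lexicographically largest infinite string readable backward from `u`. -/
def IsMaxStr {V A : Type*} [LinearOrder A] (edge : V → V → A → Prop) (u : V) (α : ℕ → A) : Prop :=
  ReadableBackward edge u α ∧ ∀ β, ReadableBackward edge u β → LexLe β α

/-- A finite string occurs as the label of a (forward) walk in the graph. -/
def Occurs {V A : Type*} (edge : V → V → A → Prop) (s : List A) : Prop :=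
  ∃ v : ℕ → V, ∀ k, (h : k < s.length) → edge (v k) (v (k + 1)) (s.get ⟨k, h⟩)

lemma lexLe_antisymm {A : Type*} [LinearOrder A] {α β : ℕ → A}
    (h1 : LexLe α β) (h2 : LexLe β α) : α = β := by
  rcases h1 with ⟨i, hpre, hi⟩ | h; swap; · exact h
  rcases h2 with ⟨j, hpre', hj⟩ | h; swap; · exact h.symm
  rcases lt_trichotomy i j with h | h | h
  · exact absurd (hpre' i h).symm hi.ne
  · subst h; exact absurd hj hi.asymm
  · exact absurd (hpre j h) hj.ne'

lemma readable_cons {V A : Type*} (edge : V → V → A → Prop) {u u' : V} {c : A}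
    (he : edge u' u c) {α : ℕ → A} (h : ReadableBackward edge u' α) :
    ReadableBackward edge u (consStr c α) := by
  obtain ⟨w, hw0, hw⟩ := h
  refine ⟨fun n => Nat.casesOn n u w, rfl, fun k => ?_⟩
  cases k with
  | zero => simpa [consStr, hw0] using he
  | succ k => exact hw k

lemma lexLe_of_cons {A : Type*} [LinearOrder A] {c : A} {α β : ℕ → A}
    (h : LexLe (consStr c α) (consStr c β)) : LexLe α β := by
  rcases h with ⟨i, hpre, hi⟩ | h
  · cases i with
    | zero => exact absurd hi (lt_irrefl c)
    | succ i =>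
      exact Or.inl ⟨i, fun j hj => hpre (j + 1) (by omega), hi⟩
  · right; funext n; exact congrFun h (n + 1)

lemma min_tail {V A : Type*} [LinearOrder A] {edge : V → V → A → Prop}
    {m : V → (ℕ → A)} (hm : ∀ u, IsMinStr edge u (m u)) (u : V) :
    ∃ u', edge u' u (m u 0) ∧ m u' = fun n => m u (n + 1) := by
  obtain ⟨⟨w, hw0, hw⟩, hmin⟩ := hm u
  refine ⟨w 1, by simpa [hw0] using hw 0, ?_⟩
  have htail : ReadableBackward edge (w 1) (fun n => m u (n + 1)) :=
    ⟨fun k => w (k + 1), rfl, fun k => hw (k + 1)⟩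
  have h1 : LexLe (m (w 1)) (fun n => m u (n + 1)) := (hm (w 1)).2 _ htail
  have hcons : ReadableBackward edge u (consStr (m u 0) (m (w 1))) :=
    readable_cons edge (by simpa [hw0] using hw 0) (hm (w 1)).1
  have h2 : LexLe (m u) (consStr (m u 0) (m (w 1))) := hmin _ hcons
  have hmu : m u = consStr (m u 0) (fun n => m u (n + 1)) := by
    funext n; cases n <;> rfl
  rw [hmu] at h2
  exact lexLe_antisymm h1 (lexLe_of_cons h2)

/-- if min_u = min_v for u ≠ v, then u and v have incoming edges with the
same label from nodes u', v' with min_{u'} = min_{v'}. -/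
theorem min_eq_propagates {V A : Type*} [Fintype V] [Fintype A] [Nonempty A] [LinearOrder A]
    (edge : V → V → A → Prop) (hin : ∀ u : V, ∃ v c, edge v u c)
    (m : V → (ℕ → A)) (hm : ∀ u, IsMinStr edge u (m u))
    (u v : V) (huv : u ≠ v) (heq : m u = m v) :
    ∃ (u' v' : V) (c : A), edge u' u c ∧ edge v' v c ∧ m u' = m v' := by
  obtain ⟨u', heu, hu⟩ := min_tail hm u
  obtain ⟨v', hev, hv⟩ := min_tail hm v
  refine ⟨u', v', m u 0, heu, by rw [heq]; exact hev, ?_⟩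
  rw [hu, hv, heq]
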